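/- Fix D ≥ 1 and 0 < δ < 1/4. Then for any two distinct z, z' ∈ A := {0} ∪ A₀, the closures of the cubes Q_z^δ and Q_{z'}^δ are disjoint: closure(Q_z^δ) ∩ closure(Q_{z'}^δ) = ∅. -/
import Mathlib


/-- `r` is a half-integer: `r = n/2` with `n` an odd integer. -/
def IsHalfInt (r : ℝ) : Prop := ∃ n : ℤ, Odd n ∧ r = (n : ℝ) / 2

/-- `A₀`: points of `ℝ^D` all of whose coordinates are of the form `n/2` with `n ∈ ℤ`,
at least one coordinate being equal to `1/2` or `-1/2`. -/
def A0set (D : ℕ) : Set (Fin D → ℝ) :=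
  {z | (∀ k, ∃ n : ℤ, z k = (n : ℝ) / 2) ∧ ∃ k, z k = 1 / 2 ∨ z k = -(1 / 2)}

/-- The open box `Q_z^δ`: coordinates with `z_k ∈ ℤ` are within `1/2 - δ` of `z_k`,
coordinates with `z_k` a half-integer are within `δ/2` of `z_k`. -/
def Qcube (D : ℕ) (δ : ℝ) (z : Fin D → ℝ) : Set (Fin D → ℝ) :=
  {a | ∀ k, ((∃ m : ℤ, z k = (m : ℝ)) → |a k - z k| < 1 / 2 - δ) ∧
            (IsHalfInt (z k) → |a k - z k| < δ / 2)}

lemma coord_bound (D : ℕ) (δ : ℝ) (z a : Fin D → ℝ)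
    (ha : a ∈ closure (Qcube D δ z)) (k : Fin D) (n : ℤ) (hn : z k = (n : ℝ) / 2) :
    |a k - z k| ≤ if Even n then 1 / 2 - δ else δ / 2 := by
  by_cases he : Even n
  · rw [if_pos he]
    obtain ⟨m, hm⟩ := he
    have hint : ∃ m : ℤ, z k = (m : ℝ) := ⟨m, by rw [hn, hm]; push_cast; ring⟩
    have hsub : closure (Qcube D δ z) ⊆ {b | |b k - z k| ≤ 1 / 2 - δ} :=
      closure_minimal (fun b hb => le_of_lt ((hb k).1 hint))
        (isClosed_le (((continuous_apply k).sub continuous_const).abs) continuous_const)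
    exact hsub ha
  · have hhalf : IsHalfInt (z k) := ⟨n, Int.not_even_iff_odd.mp he, hn⟩
    have hsub : closure (Qcube D δ z) ⊆ {b | |b k - z k| ≤ δ / 2} :=
      closure_minimal (fun b hb => le_of_lt ((hb k).2 hhalf))
        (isClosed_le (((continuous_apply k).sub continuous_const).abs) continuous_const)
    simpa [if_neg he] using hsub ha

/-- For `0 < δ < 1/4` and distinct `z, z' ∈ A = {0} ∪ A₀`, the closures of the cubes
`Q_z^δ` and `Q_{z'}^δ` are disjoint. -/
theorem Qcube_closures_disjoint (D : ℕ) (hD : 1 ≤ D) (δ : ℝ) (hδ0 : 0 < δ)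
    (hδ : δ < 1 / 4) (z z' : Fin D → ℝ)
    (hz : z ∈ ({0} : Set (Fin D → ℝ)) ∪ A0set D)
    (hz' : z' ∈ ({0} : Set (Fin D → ℝ)) ∪ A0set D) (hne : z ≠ z') :
    closure (Qcube D δ z) ∩ closure (Qcube D δ z') = ∅ := by
  rw [Set.eq_empty_iff_forall_notMem]
  rintro a ⟨ha, ha'⟩
  have hzc : ∀ k, ∃ n : ℤ, z k = (n : ℝ) / 2 := by
    rcases hz with h | h
    · intro k; exact ⟨0, by simp [Set.mem_singleton_iff.mp h]⟩
    · exact h.1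
  have hz'c : ∀ k, ∃ n : ℤ, z' k = (n : ℝ) / 2 := by
    rcases hz' with h | h
    · intro k; exact ⟨0, by simp [Set.mem_singleton_iff.mp h]⟩
    · exact h.1
  obtain ⟨k, hk⟩ : ∃ k, z k ≠ z' k := by
    by_contra h; push_neg at h; exact hne (funext h)
  obtain ⟨n, hn⟩ := hzc k
  obtain ⟨n', hn'⟩ := hz'c k
  have hnn' : n ≠ n' := by
    intro h; apply hk; rw [hn, hn', h]
  have h1 := coord_bound D δ z a ha k n hn
  have h2 := coord_bound D δ z' a ha' k n' hn'
  have htri : |z k - z' k| ≤ |a k - z k| + |a k - z' k| := by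
    have := abs_sub (z k - a k) (z' k - a k)
    calc |z k - z' k| = |(z k - a k) - (z' k - a k)| := by ring_nf
      _ ≤ |z k - a k| + |z' k - a k| := abs_sub _ _
      _ = |a k - z k| + |a k - z' k| := by rw [abs_sub_comm (z k), abs_sub_comm (z' k)]
  have habs : |z k - z' k| = |(n : ℝ) - (n' : ℝ)| / 2 := by
    rw [hn, hn', div_sub_div_same, abs_div, abs_two]
  have hsub0 : n - n' ≠ 0 := sub_ne_zero.mpr hnn'
  have hone : (1 : ℝ) ≤ |(n : ℝ) - (n' : ℝ)| := by
    have : (1 : ℤ) ≤ |n - n'| := Int.one_le_abs hsub0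
    calc (1 : ℝ) = ((1 : ℤ) : ℝ) := by norm_num
      _ ≤ ((|n - n'| : ℤ) : ℝ) := by exact_mod_cast this
      _ = |(n : ℝ) - (n' : ℝ)| := by push_cast [Int.cast_abs]; ring_nf
  have heventwo : Even (n - n') → (2 : ℝ) ≤ |(n : ℝ) - (n' : ℝ)| := by
    intro hev
    have hdvd : (2 : ℤ) ∣ n - n' := hev.two_dvd
    have : (2 : ℤ) ≤ |n - n'| :=
      Int.le_of_dvd (abs_pos.mpr hsub0) ((dvd_abs _ _).mpr hdvd)
    calc (2 : ℝ) = ((2 : ℤ) : ℝ) := by norm_num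
      _ ≤ ((|n - n'| : ℤ) : ℝ) := by exact_mod_cast this
      _ = |(n : ℝ) - (n' : ℝ)| := by push_cast [Int.cast_abs]; ring_nf
  rcases Int.even_or_odd n with he | ho <;> rcases Int.even_or_odd n' with he' | ho'
  · -- both even: gap ≥ 1, sum of radii = 1 - 2δ
    have hge := heventwo (Int.even_sub.mpr (by simp [he, he']))
    rw [if_pos he] at h1; rw [if_pos he'] at h2
    rw [habs] at htri; linarith
  · -- even / odd: gap ≥ 1/2, sum = 1/2 - δ/2
    rw [if_pos he] at h1; rw [if_neg (Int.not_even_iff_odd.mpr ho')] at h2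
    rw [habs] at htri; linarith
  · -- odd / even
    rw [if_neg (Int.not_even_iff_odd.mpr ho)] at h1; rw [if_pos he'] at h2
    rw [habs] at htri; linarith
  · -- both odd: gap ≥ 1, sum = δ
    have hge := heventwo (Int.even_sub.mpr (by simp [Int.not_even_iff_odd.mpr ho, Int.not_even_iff_odd.mpr ho']))
    rw [if_neg (Int.not_even_iff_odd.mpr ho)] at h1
    rw [if_neg (Int.not_even_iff_odd.mpr ho')] at h2
    rw [habs] at htri; linarith
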